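/- Let 𝔤 be a 4-dimensional Lie algebra whose derived subalgebra has dimension 1, with structure de₂* = de₃* = de₄* = 0 and de₁* = e₂* ∧ e₃* (i.e. [e₂,e₃] = -e₁, all other brackets zero). Then ω = e₁* ∧ e₂* + e₃* ∧ e₄* is a symplectic form on 𝔤, and every symplectic form on 𝔤 is not exact (since the image of d on 1-cochains is spanned by the decomposable form e₂* ∧ e₃*, whose square is zero). -/

import Mathlib

set_option synthInstance.maxHeartbeats 1000000
set_option maxHeartbeats 3000000


open scoped TensorProduct

variable {V : Type*} [AddCommGroup V] [Module ℝ V]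

noncomputable def wedgeF {k l : ℕ} (f : V [⋀^Fin k]→ₗ[ℝ] ℝ) (g : V [⋀^Fin l]→ₗ[ℝ] ℝ) :
    V [⋀^Fin (k + l)]→ₗ[ℝ] ℝ :=
  ((TensorProduct.lid ℝ ℝ).toLinearMap.compAlternatingMap (f.domCoprod g)).domDomCongr
    finSumFinEquiv

noncomputable def wpowF (ω : V [⋀^Fin 2]→ₗ[ℝ] ℝ) : (n : ℕ) → V [⋀^Fin (2 * n)]→ₗ[ℝ] ℝ
  | 0 => AlternatingMap.constOfIsEmpty ℝ V (Fin 0) 1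
  | n + 1 => wedgeF (wpowF ω n) ω

noncomputable def oneAlt (α : Module.Dual ℝ V) : V [⋀^Fin 1]→ₗ[ℝ] ℝ :=
  AlternatingMap.ofSubsingleton ℝ V ℝ 0 α

noncomputable def bilinToAlt (B : V →ₗ[ℝ] V →ₗ[ℝ] ℝ) (hB : ∀ x, B x x = 0) :
    V [⋀^Fin 2]→ₗ[ℝ] ℝ where
  toFun v := B (v 0) (v 1)
  map_update_add' := by
    intro _ v i x y
    fin_cases i <;> simp
  map_update_smul' := by
    intro _ v i c x
    fin_cases i <;> simp
  map_eq_zero_of_eq' := by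
    intro v i j hij hne
    have h01 : v 0 = v 1 := by
      fin_cases i <;> fin_cases j <;> simp_all
    show B (v 0) (v 1) = 0
    rw [h01]; exact hB _

variable {L : Type*} [LieRing L] [LieAlgebra ℝ L]

noncomputable def ceD (α : Module.Dual ℝ L) : L [⋀^Fin 2]→ₗ[ℝ] ℝ :=
  bilinToAlt
    (LinearMap.mk₂ ℝ (fun x y => -α ⁅x, y⁆)
      (fun x x' y => by simp [add_lie]; exact add_comm _ _)
      (fun c x y => by simp [smul_lie])
      (fun x y y' => by simp [lie_add]; exact add_comm _ _)
      (fun c x y => by simp [lie_smul]))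
    (fun x => by simp)

/-- closedness of a 2-cochain under the Chevalley–Eilenberg differential -/
def IsCEClosed (ω : L [⋀^Fin 2]→ₗ[ℝ] ℝ) : Prop :=
  ∀ x y z : L, ω ![⁅x, y⁆, z] - ω ![⁅x, z⁆, y] + ω ![⁅y, z⁆, x] = 0

/-! ### Auxiliary lemmas -/

open Equiv

lemma wedgeF_apply {k l : ℕ} (f : V [⋀^Fin k]→ₗ[ℝ] ℝ) (g : V [⋀^Fin l]→ₗ[ℝ] ℝ)
    (v : Fin (k + l) → V) :
    ((k.factorial * l.factorial : ℕ) : ℝ) * wedgeF f g v =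
      ∑ σ : Perm (Fin k ⊕ Fin l), (Perm.sign σ : ℤ) •
        (f (fun i => v (finSumFinEquiv (σ (Sum.inl i)))) *
         g (fun i => v (finSumFinEquiv (σ (Sum.inr i))))) := by
  have h := MultilinearMap.domCoprod_alternization_eq f g
  have h2 := congrArg (fun m => (TensorProduct.lid ℝ ℝ) (m (v ∘ finSumFinEquiv))) h
  simp only [Fintype.card_fin, AlternatingMap.smul_apply, map_nsmul] at h2
  rw [show ((MultilinearMap.alternatization ((↑f : MultilinearMap ℝ _ ℝ).domCoprod ↑g)) (v ∘ finSumFinEquiv) : ℝ ⊗[ℝ] ℝ)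
      = ∑ σ : Perm (Fin k ⊕ Fin l), Perm.sign σ •
          ((↑f : MultilinearMap ℝ _ ℝ).domCoprod ↑g).domDomCongr σ (v ∘ finSumFinEquiv)
    from MultilinearMap.alternatization_apply _ _, map_sum] at h2
  rw [wedgeF]
  simp only [AlternatingMap.domDomCongr_apply, LinearMap.compAlternatingMap_apply,
    LinearEquiv.coe_toLinearMap]
  rw [← nsmul_eq_mul, ← h2]
  congr 1
  ext σ
  simp [MultilinearMap.domCoprod_apply, Function.comp, TensorProduct.smul_tmul',
    TensorProduct.lid_tmul, smul_eq_mul, Units.smul_def, zsmul_eq_mul, mul_assoc]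

lemma sum_perm_fin_succ {M : Type*} [AddCommMonoid M] {n : ℕ} (h : Perm (Fin (n+1)) → M) :
    ∑ σ, h σ = ∑ i : Fin (n+1), ∑ τ : Perm (Fin n), h (Perm.decomposeFin.symm (i, τ)) :=
  (Fintype.sum_equiv Perm.decomposeFin _ (fun p => h (Perm.decomposeFin.symm p))
    (fun σ => by simp)).trans (Fintype.sum_prod_type _)

lemma sum_perm_fin_one {M : Type*} [AddCommMonoid M] (h : Perm (Fin 1) → M) :
    ∑ σ, h σ = h 1 := by
  rw [Fintype.sum_subsingleton h 1]

lemma sum_perm_sum_eq {k l : ℕ} {M : Type*} [AddCommMonoid M] (F : Perm (Fin k ⊕ Fin l) → M) :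
    ∑ σ, F σ = ∑ σ' : Perm (Fin (k+l)), F (finSumFinEquiv.symm.permCongr σ') :=
  Fintype.sum_equiv (finSumFinEquiv.symm.permCongr).symm _ _
    (fun σ => congrArg F (by ext x; simp))

lemma wedgeF_apply' {k l : ℕ} (f : V [⋀^Fin k]→ₗ[ℝ] ℝ) (g : V [⋀^Fin l]→ₗ[ℝ] ℝ)
    (v : Fin (k + l) → V) :
    ((k.factorial * l.factorial : ℕ) : ℝ) * wedgeF f g v =
      ∑ σ : Perm (Fin (k + l)), (Perm.sign σ : ℤ) •
        (f (fun i => v (σ (finSumFinEquiv (Sum.inl i)))) *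
         g (fun i => v (σ (finSumFinEquiv (Sum.inr i))))) := by
  rw [wedgeF_apply, sum_perm_sum_eq]
  congr 1; ext σ
  simp [Equiv.permCongr_apply, Perm.sign_permCongr]

lemma wedge11 (α β : Module.Dual ℝ V) (x y : V) :
    wedgeF (oneAlt α) (oneAlt β) ![x, y] = α x * β y - α y * β x := by
  have h := wedgeF_apply' (oneAlt α) (oneAlt β) ![x, y]
  rw [sum_perm_fin_succ] at h
  simp only [sum_perm_fin_one] at h
  rw [Fin.sum_univ_two] at h
  simp only [Perm.decomposeFin_symm_of_one, Equiv.swap_self, Perm.sign_swap, Perm.sign_refl,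
    Equiv.swap_apply_left, Equiv.swap_apply_right, oneAlt] at h
  norm_num at h
  simp only [show ((Fin.castAdd 1 0 : Fin 2)) = 0 from rfl, Equiv.swap_apply_left,
    Equiv.refl_apply, Matrix.cons_val_zero, Matrix.cons_val_one, Matrix.head_cons] at h
  rw [oneAlt, oneAlt, h]; ring

lemma sum_perm_fin_four {M : Type*} [AddCommMonoid M] (F : Perm (Fin 4) → M) : ∑ σ, F σ =
    ∑ i : Fin 4, ∑ j : Fin 3, ∑ k : Fin 2,
      F (Perm.decomposeFin.symm (i, Perm.decomposeFin.symm (j, Perm.decomposeFin.symm (k, 1)))) := by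
  simp only [sum_perm_fin_succ, sum_perm_fin_one, Finset.univ_unique, Finset.sum_singleton]
  rw [show (1 : Perm (Fin 1)) = default from Subsingleton.elim _ _]

lemma alt_sum_perm4 (T : Fin 4 → Fin 4 → Fin 4 → Fin 4 → ℝ) :
    ∑ σ : Perm (Fin 4), (Perm.sign σ : ℤ) • T (σ 0) (σ 1) (σ 2) (σ 3) =
      T 0 1 2 3 - T 0 1 3 2 - T 0 2 1 3 + T 0 2 3 1 + T 0 3 1 2 - T 0 3 2 1
      - T 1 0 2 3 + T 1 0 3 2 + T 1 2 0 3 - T 1 2 3 0 - T 1 3 0 2 + T 1 3 2 0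
      + T 2 0 1 3 - T 2 0 3 1 - T 2 1 0 3 + T 2 1 3 0 + T 2 3 0 1 - T 2 3 1 0
      - T 3 0 1 2 + T 3 0 2 1 + T 3 1 0 2 - T 3 1 2 0 - T 3 2 0 1 + T 3 2 1 0 := by
  rw [sum_perm_fin_four]
  simp only [Fin.sum_univ_four, Fin.sum_univ_three, Fin.sum_univ_two]
  simp only [show (1:Fin 4) = (0:Fin 3).succ from rfl, show (2:Fin 4) = (1:Fin 3).succ from rfl,
    show (3:Fin 4) = (2:Fin 3).succ from rfl,
    Perm.decomposeFin_symm_apply_zero, Perm.decomposeFin_symm_apply_succ,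
    Perm.decomposeFin.symm_sign,
    show (1:Fin 3) = (0:Fin 2).succ from rfl, show (2:Fin 3) = (1:Fin 2).succ from rfl,
    show (1:Fin 2) = (0:Fin 1).succ from rfl,
    Perm.one_apply, Equiv.swap_apply_def]
  norm_num [Fin.ext_iff]
  ring

lemma wedge22_apply (f g : V [⋀^Fin 2]→ₗ[ℝ] ℝ) (v : Fin 4 → V) :
    (4 : ℝ) * wedgeF f g v =
      ∑ σ : Perm (Fin 4), (Perm.sign σ : ℤ) •
        (f ![v (σ 0), v (σ 1)] * g ![v (σ 2), v (σ 3)]) := by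
  have h := wedgeF_apply' f g v
  have e0 : ∀ σ : Perm (Fin 4),
      (fun i : Fin 2 => v (σ ((finSumFinEquiv (Sum.inl i) : Fin (2 + 2))))) = ![v (σ 0), v (σ 1)] := by
    intro σ; ext i; fin_cases i <;> rfl
  have e1 : ∀ σ : Perm (Fin 4),
      (fun i : Fin 2 => v (σ ((finSumFinEquiv (Sum.inr i) : Fin (2 + 2))))) = ![v (σ 2), v (σ 3)] := by
    intro σ; ext i; fin_cases i <;> rfl
  simp only [e0, e1] at h
  norm_num [Nat.factorial] at h
  rw [h]
  congr 1; ext σ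
  simp [Units.smul_def, zsmul_eq_mul]

/-- for the 4-dimensional Lie algebra with de₁* = e₂*∧e₃*,
ω = e₁*∧e₂* + e₃*∧e₄* is symplectic and no symplectic form on it is exact. -/
theorem stmt17 (b : Module.Basis (Fin 4) ℝ L)
    (h12 : ⁅b 1, b 2⁆ = -(b 0))
    (h01 : ⁅b 0, b 1⁆ = 0) (h02 : ⁅b 0, b 2⁆ = 0) (h03 : ⁅b 0, b 3⁆ = 0)
    (h13 : ⁅b 1, b 3⁆ = 0) (h23 : ⁅b 2, b 3⁆ = 0) :
    IsCEClosed (wedgeF (oneAlt (b.coord 0)) (oneAlt (b.coord 1)) +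
        wedgeF (oneAlt (b.coord 2)) (oneAlt (b.coord 3))) ∧
      wedgeF (wedgeF (oneAlt (b.coord 0)) (oneAlt (b.coord 1)) +
          wedgeF (oneAlt (b.coord 2)) (oneAlt (b.coord 3)))
        (wedgeF (oneAlt (b.coord 0)) (oneAlt (b.coord 1)) +
          wedgeF (oneAlt (b.coord 2)) (oneAlt (b.coord 3))) ≠ 0 ∧
      (∀ ω' : L [⋀^Fin 2]→ₗ[ℝ] ℝ, IsCEClosed ω' → wedgeF ω' ω' ≠ 0 →
        ∀ β : Module.Dual ℝ L, ceD β ≠ ω') := by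
  -- reversed brackets
  have h10 : ⁅b 1, b 0⁆ = 0 := by rw [← lie_skew, h01, neg_zero]
  have h20 : ⁅b 2, b 0⁆ = 0 := by rw [← lie_skew, h02, neg_zero]
  have h30 : ⁅b 3, b 0⁆ = 0 := by rw [← lie_skew, h03, neg_zero]
  have h21 : ⁅b 2, b 1⁆ = b 0 := by rw [← lie_skew, h12, neg_neg]
  have h31 : ⁅b 3, b 1⁆ = 0 := by rw [← lie_skew, h13, neg_zero]
  have h32 : ⁅b 3, b 2⁆ = 0 := by rw [← lie_skew, h23, neg_zero]
  -- the bracket formula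
  have hbr : ∀ x y : L,
      ⁅x, y⁆ = (b.repr x 2 * b.repr y 1 - b.repr x 1 * b.repr y 2) • b 0 := by
    intro x y
    conv_lhs => rw [← b.sum_repr x, ← b.sum_repr y]
    rw [Fin.sum_univ_four, Fin.sum_univ_four]
    simp only [add_lie, lie_add, smul_lie, lie_smul, smul_smul, lie_self,
      h01, h02, h03, h12, h13, h23, h10, h20, h21, h30, h31, h32,
      smul_zero, add_zero, zero_add, smul_neg]
    module
  set ω : L [⋀^Fin 2]→ₗ[ℝ] ℝ := wedgeF (oneAlt (b.coord 0)) (oneAlt (b.coord 1)) +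
      wedgeF (oneAlt (b.coord 2)) (oneAlt (b.coord 3)) with hωdef
  have hω : ∀ u w : L, ω ![u, w] =
      b.repr u 0 * b.repr w 1 - b.repr w 0 * b.repr u 1 +
        (b.repr u 2 * b.repr w 3 - b.repr w 2 * b.repr u 3) := by
    intro u w
    rw [hωdef, AlternatingMap.add_apply, wedge11, wedge11]
    simp [Module.Basis.coord_apply]
  -- ω values on basis pairs
  have hrepr : ∀ i j : Fin 4, b.repr (b i) j = if i = j then 1 else 0 := by
    intro i j; rw [b.repr_self i]; exact Finsupp.single_apply
  refine ⟨?_, ?_, ?_⟩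
  · -- closedness
    intro x y z
    rw [hbr x y, hbr x z, hbr y z, hω, hω, hω]
    simp only [map_smul, Finsupp.smul_apply, hrepr, smul_eq_mul]
    simp only [Fin.isValue, show ((0:Fin 4) = 2) = False from eq_false (by decide),
      show ((0:Fin 4) = 3) = False from eq_false (by decide), if_false]
    norm_num
    ring
  · -- non-degeneracy (nonzero square)
    intro h0
    have h4 := wedge22_apply ω ω ⇑b
    rw [alt_sum_perm4 (fun p q r s => ω ![b p, b q] * ω ![b r, b s])] at h4
    simp only [hω, hrepr] at h4
    norm_num at h4
    rw [h0] at h4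
    simp at h4
    norm_num at h4
  · -- non-exactness
    intro ω' _ hsq β hβ
    apply hsq
    rw [← hβ]
    ext v
    rw [AlternatingMap.zero_apply]
    have hc : ∀ u w : L, ceD β ![u, w] = -β ⁅u, w⁆ := fun u w => rfl
    have h4 := wedge22_apply (ceD β) (ceD β) v
    rw [alt_sum_perm4 (fun p q r s => ceD β ![v p, v q] * ceD β ![v r, v s])] at h4
    simp only [hc, hbr, map_smul, smul_eq_mul] at h4
    have : (4 : ℝ) * (wedgeF (ceD β) (ceD β)) v = 0 := by rw [h4]; ring
    linarith
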